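/- Let n ≥ 2, R > 0, M = ⌊2^{nR}⌋, and let S be a random variable with cumulative distribution function P(S ≤ s) = (1 − Q_n(s))^M on [−1, 1]. Define Δ₁ = √( (S − √(1 − 2^{−2R}))² + (√(1 − S²) − 2^{−R})² ). Then for all p ≥ 1, (E[(√n Δ₁)^p])^{1/p} ≤ C √p, where C is a constant depending only on R. -/

import Mathlib

open MeasureTheory ProbabilityTheory Real
open scoped RealInnerProductSpace ENNReal NNReal

noncomputable section

/-- The standard Gaussian measure `N(0, I_n)` on `ℝⁿ` (as Euclidean space). -/
def stdGaussian (n : ℕ) : Measure (EuclideanSpace ℝ (Fin n)) :=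
  Measure.map (MeasurableEquiv.toLp 2 (Fin n → ℝ))
    (Measure.pi fun _ : Fin n => gaussianReal 0 1)

/-- The uniform distribution on the unit sphere of `ℝⁿ` (as a measure on `ℝⁿ`),
realized as the law of `W/‖W‖` for a standard Gaussian vector `W`;
this is the normalized rotation-invariant measure on the sphere. -/
def uniformSphere (n : ℕ) : Measure (EuclideanSpace ℝ (Fin n)) :=
  Measure.map (fun w => ‖w‖⁻¹ • w) (stdGaussian n)

/-- Given a codebook `c` of `M` codewords, the codeword maximizing the cosine
similarity with `x` (an arbitrary codeword is used for ties or `x = 0`;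
junk value `0` if `M = 0`). -/
def bestCodeword {n M : ℕ} (x : EuclideanSpace ℝ (Fin n))
    (c : Fin M → EuclideanSpace ℝ (Fin n)) : EuclideanSpace ℝ (Fin n) :=
  match (List.finRange M).argmax (fun i => ⟪c i, x⟫ / (‖c i‖ * ‖x‖)) with
  | some i => c i
  | none => 0

/-- The number of codewords `M = ⌊2^{nR}⌋` of a bitrate-`R` random spherical
code in dimension `n`. -/
def numCodewords (n : ℕ) (R : ℝ) : ℕ := ⌊(2 : ℝ) ^ ((n : ℝ) * R)⌋₊

/-- The law (marginalized over the random codebook, drawn i.i.d. uniformly on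
the unit sphere) of the output of a bitrate-`R` random spherical code with
input `x` and magnitude `ρ`. -/
def rscLaw (n : ℕ) (R : ℝ) (ρ : ℝ) (x : EuclideanSpace ℝ (Fin n)) :
    Measure (EuclideanSpace ℝ (Fin n)) :=
  Measure.map (fun c : Fin (numCodewords n R) → EuclideanSpace ℝ (Fin n) =>
      ρ • bestCodeword x c)
    (Measure.pi fun _ => uniformSphere n)

end
/-- The normalizing constant `κ_n = Γ(n/2)/(√π·Γ((n-1)/2))`. -/
noncomputable def kappaConst (n : ℕ) : ℝ :=
  Real.Gamma ((n : ℝ) / 2) / (Real.sqrt Real.pi * Real.Gamma (((n : ℝ) - 1) / 2))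

/-- `Q_n(g) = κ_n ∫_g^1 (1 - t²)^{(n-3)/2} dt`, the complementary CDF of the
cosine similarity between a fixed vector and a uniform point on the unit
sphere of `ℝⁿ`. -/
noncomputable def Qfun (n : ℕ) (g : ℝ) : ℝ :=
  kappaConst n * ∫ t in g..1, (1 - t ^ 2) ^ (((n : ℝ) - 3) / 2)

/-- The uniform (normalized rotation-invariant) distribution on the unit sphere
of the hyperplane orthogonal to `x`, i.e. on `{h : ‖h‖ = 1, ⟪x, h⟫ = 0}`,
realized by normalizing the orthogonal projection of a standard Gaussian. -/
noncomputable def uniformOrthSphere {n : ℕ} (x : EuclideanSpace ℝ (Fin n)) :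
    Measure (EuclideanSpace ℝ (Fin n)) :=
  Measure.map (fun w =>
      ‖(((Submodule.span ℝ {x})ᗮ).orthogonalProjectionOnto w :
          EuclideanSpace ℝ (Fin n))‖⁻¹ •
        (((Submodule.span ℝ {x})ᗮ).orthogonalProjectionOnto w :
          EuclideanSpace ℝ (Fin n)))
    (stdGaussian n)
set_option maxHeartbeats 1000000

/-- `y ≤ exp (y - 1)`, so `x * exp (-s*x) ≤ p/s` style bounds. -/
lemma aux_le_exp_sub_one (y : ℝ) : y ≤ Real.exp (y - 1) := by
  have := Real.add_one_le_exp (y - 1); linarith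

/-- For `x ≥ 0`, `s > 0`, `p > 0`: `x ^ p * exp (-(s * x)) ≤ (p / s) ^ p`. -/
lemma aux_rpow_exp_le {x s p : ℝ} (hx : 0 ≤ x) (hs : 0 < s) (hp : 0 < p) :
    x ^ p * Real.exp (-(s * x)) ≤ (p / s) ^ p := by
  have h1 : x * Real.exp (-(s * x) / p) ≤ p / s := by
    have hy : s * x / p ≤ Real.exp (s * x / p - 1) := aux_le_exp_sub_one _
    have he : Real.exp (s * x / p - 1) = Real.exp (s * x / p) / Real.exp 1 := by
      rw [Real.exp_sub]
    have hpos : (0:ℝ) < Real.exp (s * x / p) := Real.exp_pos _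
    -- s*x/p ≤ exp(s*x/p)/e  ⟹  x * exp(-(s*x)/p) ≤ p/(s*e) ≤ p/s
    have h2 : x * Real.exp (-(s * x) / p) = (s * x / p) * Real.exp (-(s * x / p)) * (p / s) := by
      rw [neg_div]
      field_simp
    rw [h2]
    have h3 : (s * x / p) * Real.exp (-(s * x / p)) ≤ 1 := by
      rw [Real.exp_neg]
      rw [he] at hy
      have hsx : 0 ≤ s * x / p := by positivity
      calc (s * x / p) * (Real.exp (s * x / p))⁻¹
          ≤ (Real.exp (s * x / p) / Real.exp 1) * (Real.exp (s * x / p))⁻¹ := by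
            apply mul_le_mul_of_nonneg_right hy (by positivity)
        _ = (Real.exp 1)⁻¹ := by field_simp
        _ ≤ 1 := by
            rw [inv_le_one_iff₀]; right
            have := Real.add_one_le_exp (1:ℝ); linarith
    calc (s * x / p) * Real.exp (-(s * x / p)) * (p / s) ≤ 1 * (p / s) := by
          apply mul_le_mul_of_nonneg_right h3 (by positivity)
      _ = p / s := one_mul _
  have h4 : (x * Real.exp (-(s * x) / p)) ^ p ≤ (p / s) ^ p := by
    apply Real.rpow_le_rpow (by positivity) h1 hp.le
  calc x ^ p * Real.exp (-(s * x))
      = (x * Real.exp (-(s * x) / p)) ^ p := by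
        rw [Real.mul_rpow hx (Real.exp_pos _).le, ← Real.exp_mul, div_mul_cancel₀]
        exact hp.ne'
    _ ≤ (p / s) ^ p := h4

/-- Master asymptotic lemma: `A * x ≤ exp (δ * √x)` for `x` large. -/
lemma aux_master {δ : ℝ} (hδ : 0 < δ) (A : ℝ) :
    ∃ n₀ : ℕ, ∀ n : ℕ, n₀ ≤ n → A * n ≤ Real.exp (δ * Real.sqrt n) := by
  refine ⟨⌈((3/δ)^3 * (|A|+1))^2⌉₊, fun n hn => ?_⟩
  have hB : (0:ℝ) ≤ (3/δ)^3 * (|A|+1) := by positivity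
  have hnn : (((3/δ)^3 * (|A|+1))^2 : ℝ) ≤ n := by
    calc ((3/δ)^3 * (|A|+1))^2 ≤ (⌈((3/δ)^3 * (|A|+1))^2⌉₊ : ℝ) := Nat.le_ceil _
      _ ≤ n := Nat.cast_le.2 hn
  have hsq : (3/δ)^3 * (|A|+1) ≤ Real.sqrt n := by
    calc (3/δ)^3 * (|A|+1) = Real.sqrt (((3/δ)^3 * (|A|+1))^2) := (Real.sqrt_sq hB).symm
      _ ≤ Real.sqrt n := Real.sqrt_le_sqrt hnn
  have hsn : (0:ℝ) ≤ Real.sqrt n := Real.sqrt_nonneg _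
  have hexp : (δ * Real.sqrt n / 3)^3 ≤ Real.exp (δ * Real.sqrt n) := by
    have h1 : δ * Real.sqrt n / 3 ≤ Real.exp (δ * Real.sqrt n / 3) := by
      have := Real.add_one_le_exp (δ * Real.sqrt n / 3); linarith
    have h2 : (δ * Real.sqrt n / 3)^3 ≤ (Real.exp (δ * Real.sqrt n / 3))^3 :=
      pow_le_pow_left₀ (by positivity) h1 3
    calc (δ * Real.sqrt n / 3)^3 ≤ (Real.exp (δ * Real.sqrt n / 3))^3 := h2
      _ = Real.exp (δ * Real.sqrt n) := by
          rw [← Real.exp_nat_mul]; norm_num; ring_nf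
  have hAn : A * n ≤ (δ * Real.sqrt n / 3)^3 := by
    have hn' : (n:ℝ) = Real.sqrt n * Real.sqrt n := (Real.mul_self_sqrt (Nat.cast_nonneg n)).symm
    have key : (|A|+1) * (Real.sqrt n * Real.sqrt n) ≤ (δ/3)^3 * (Real.sqrt n)^3 := by
      have h5 : (|A|+1) ≤ (δ/3)^3 * Real.sqrt n := by
        have hδ3 : (0:ℝ) < (δ/3)^3 := by positivity
        have := mul_le_mul_of_nonneg_left hsq hδ3.le
        calc (|A|+1) = (δ/3)^3 * ((3/δ)^3 * (|A|+1)) := by field_simp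
          _ ≤ (δ/3)^3 * Real.sqrt n := by
              apply mul_le_mul_of_nonneg_left hsq hδ3.le
      calc (|A|+1) * (Real.sqrt n * Real.sqrt n)
          ≤ ((δ/3)^3 * Real.sqrt n) * (Real.sqrt n * Real.sqrt n) := by
            apply mul_le_mul_of_nonneg_right h5 (by positivity)
        _ = (δ/3)^3 * (Real.sqrt n)^3 := by ring
    calc A * n ≤ (|A|+1) * n := by
          apply mul_le_mul_of_nonneg_right _ (Nat.cast_nonneg n)
          have := le_abs_self A; linarith
      _ = (|A|+1) * (Real.sqrt n * Real.sqrt n) := by rw [← hn']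
      _ ≤ (δ/3)^3 * (Real.sqrt n)^3 := key
      _ = (δ * Real.sqrt n / 3)^3 := by ring
  linarith

lemma aux_gamma_midpoint {x : ℝ} (hx : 0 < x) :
    Real.Gamma (x + 1/2) ^ 2 ≤ Real.Gamma x * Real.Gamma (x + 1) := by
  have hc := Real.convexOn_log_Gamma
  have hx1 : x + 1 ∈ Set.Ioi (0:ℝ) := by simp; linarith
  have hx0 : x ∈ Set.Ioi (0:ℝ) := hx
  have h := hc.2 hx0 hx1 (by norm_num : (0:ℝ) ≤ 1/2) (by norm_num : (0:ℝ) ≤ 1/2) (by norm_num)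
  simp only [Function.comp, smul_eq_mul] at h
  have hmid : (1/2 : ℝ) * x + (1/2 : ℝ) * (x + 1) = x + 1/2 := by ring
  rw [hmid] at h
  have h2 : 0 < Real.Gamma x := Real.Gamma_pos_of_pos hx
  have h3 : 0 < Real.Gamma (x + 1) := Real.Gamma_pos_of_pos (by linarith)
  have h4 : Real.log (Real.Gamma (x + 1/2) ^ 2) ≤ Real.log (Real.Gamma x * Real.Gamma (x + 1)) := by
    rw [Real.log_pow, Real.log_mul h2.ne' h3.ne']
    push_cast
    linarith [h]
  have h1 : 0 < Real.Gamma (x + 1/2) := Real.Gamma_pos_of_pos (by linarith)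
  exact (Real.log_le_log_iff (by positivity) (by positivity)).1 h4

lemma aux_gamma_ratio_upper {x : ℝ} (hx : 0 < x) :
    Real.Gamma (x + 1/2) ≤ Real.sqrt x * Real.Gamma x := by
  have h := aux_gamma_midpoint hx
  rw [Real.Gamma_add_one hx.ne'] at h
  have h2 : 0 < Real.Gamma x := Real.Gamma_pos_of_pos hx
  have h1 : 0 < Real.Gamma (x + 1/2) := Real.Gamma_pos_of_pos (by linarith)
  have hsq : Real.Gamma (x + 1/2) ^ 2 ≤ (Real.sqrt x * Real.Gamma x) ^ 2 := by
    have he : (Real.sqrt x * Real.Gamma x) ^ 2 = x * Real.Gamma x ^ 2 := by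
      rw [mul_pow, Real.sq_sqrt hx.le]
    rw [he]
    calc Real.Gamma (x + 1/2) ^ 2 ≤ Real.Gamma x * (x * Real.Gamma x) := h
      _ = x * Real.Gamma x ^ 2 := by ring
  calc Real.Gamma (x + 1/2) = Real.sqrt (Real.Gamma (x + 1/2) ^ 2) := (Real.sqrt_sq h1.le).symm
    _ ≤ Real.sqrt ((Real.sqrt x * Real.Gamma x) ^ 2) := Real.sqrt_le_sqrt hsq
    _ = Real.sqrt x * Real.Gamma x := Real.sqrt_sq (by positivity)

lemma aux_gamma_ratio_lower {x : ℝ} (hx : 0 < x) :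
    x * Real.Gamma x ≤ Real.sqrt (x + 1/2) * Real.Gamma (x + 1/2) := by
  have h := aux_gamma_midpoint (show (0:ℝ) < x + 1/2 by linarith)
  have e1 : x + 1/2 + 1/2 = x + 1 := by ring
  have e2 : x + 1/2 + 1 = (x + 1/2) + 1 := by ring
  rw [e1, e2, Real.Gamma_add_one (by positivity : x + 1/2 ≠ 0)] at h
  rw [Real.Gamma_add_one hx.ne'] at h
  -- h : (x * Γ x)^2 ≤ Γ(x+1/2) * ((x+1/2) * Γ(x+1/2))
  have h1 : 0 < Real.Gamma (x + 1/2) := Real.Gamma_pos_of_pos (by linarith)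
  have h2 : 0 < Real.Gamma x := Real.Gamma_pos_of_pos hx
  have hsq : (x * Real.Gamma x) ^ 2 ≤ (Real.sqrt (x + 1/2) * Real.Gamma (x + 1/2)) ^ 2 := by
    have he : (Real.sqrt (x + 1/2) * Real.Gamma (x + 1/2)) ^ 2
        = (x + 1/2) * Real.Gamma (x + 1/2) ^ 2 := by
      rw [mul_pow, Real.sq_sqrt (by positivity)]
    rw [he]; nlinarith [h]
  calc x * Real.Gamma x = Real.sqrt ((x * Real.Gamma x) ^ 2) := (Real.sqrt_sq (by positivity)).symm
    _ ≤ Real.sqrt ((Real.sqrt (x + 1/2) * Real.Gamma (x + 1/2)) ^ 2) := Real.sqrt_le_sqrt hsq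
    _ = Real.sqrt (x + 1/2) * Real.Gamma (x + 1/2) := Real.sqrt_sq (by positivity)

lemma aux_kappa_le {n : ℕ} (hn : 2 ≤ n) : kappaConst n ≤ Real.sqrt n := by
  have hn2 : (2:ℝ) ≤ n := by exact_mod_cast hn
  set x : ℝ := ((n:ℝ) - 1)/2 with hxdef
  have hx : 0 < x := by rw [hxdef]; linarith
  have hhalf : (n:ℝ)/2 = x + 1/2 := by rw [hxdef]; ring
  have h2 : 0 < Real.Gamma x := Real.Gamma_pos_of_pos hx
  have hπ : (1:ℝ) ≤ Real.sqrt Real.pi := by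
    rw [show (1:ℝ) = Real.sqrt 1 by simp]
    exact Real.sqrt_le_sqrt (by linarith [Real.pi_gt_three])
  have hup := aux_gamma_ratio_upper hx
  rw [kappaConst, hhalf]
  calc Real.Gamma (x + 1/2) / (Real.sqrt Real.pi * Real.Gamma x)
      ≤ (Real.sqrt x * Real.Gamma x) / (Real.sqrt Real.pi * Real.Gamma x) := by
        apply div_le_div_of_nonneg_right hup (by positivity) |>.trans_eq rfl
    _ = Real.sqrt x / Real.sqrt Real.pi := by
        field_simp
    _ ≤ Real.sqrt x / 1 := by
        apply div_le_div_of_nonneg_left (Real.sqrt_nonneg _) one_pos hπ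
    _ = Real.sqrt x := by ring
    _ ≤ Real.sqrt n := Real.sqrt_le_sqrt (by rw [hxdef]; linarith)

lemma aux_kappa_ge {n : ℕ} (hn : 2 ≤ n) : Real.sqrt n / 6 ≤ kappaConst n := by
  have hn2 : (2:ℝ) ≤ n := by exact_mod_cast hn
  set x : ℝ := ((n:ℝ) - 1)/2 with hxdef
  have hx : 0 < x := by rw [hxdef]; linarith
  have hhalf : (n:ℝ)/2 = x + 1/2 := by rw [hxdef]; ring
  have h2 : 0 < Real.Gamma x := Real.Gamma_pos_of_pos hx
  have h1 : 0 < Real.Gamma (x + 1/2) := Real.Gamma_pos_of_pos (by linarith)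
  have hπpos : (0:ℝ) < Real.sqrt Real.pi := Real.sqrt_pos.2 Real.pi_pos
  have hlow := aux_gamma_ratio_lower hx
  rw [kappaConst, hhalf]
  rw [div_le_div_iff₀ (by norm_num) (by positivity)]
  -- ⊢ √n * (√π * Γ x) ≤ Γ (x + 1/2) * 6
  have hkey : Real.sqrt n * Real.sqrt (x + 1/2) * Real.sqrt Real.pi ≤ 6 * x := by
    have e3 : x + 1/2 = (n:ℝ)/2 := by rw [hxdef]; ring
    have e4 : Real.sqrt n * Real.sqrt (x + 1/2) * Real.sqrt Real.pi
        = Real.sqrt ((n:ℝ) * ((n:ℝ)/2) * Real.pi) := by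
      rw [e3, ← Real.sqrt_mul (Nat.cast_nonneg n), ← Real.sqrt_mul (by positivity)]
    have e5 : (n:ℝ) * ((n:ℝ)/2) * Real.pi = (n:ℝ)^2 * (Real.pi/2) := by ring
    have e6 : Real.sqrt ((n:ℝ)^2 * (Real.pi/2)) = (n:ℝ) * Real.sqrt (Real.pi/2) := by
      rw [Real.sqrt_mul (by positivity), Real.sqrt_sq (Nat.cast_nonneg n)]
    have e7 : Real.sqrt (Real.pi/2) ≤ 3/2 := by
      rw [show (3/2:ℝ) = Real.sqrt ((3/2)^2) from (Real.sqrt_sq (by norm_num)).symm]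
      apply Real.sqrt_le_sqrt
      nlinarith [Real.pi_le_four]
    rw [e4, e5, e6]
    have : (n:ℝ) * Real.sqrt (Real.pi/2) ≤ (n:ℝ) * (3/2) := by
      apply mul_le_mul_of_nonneg_left e7 (Nat.cast_nonneg n)
    rw [hxdef]; linarith
  -- from hlow : x Γx ≤ √(x+1/2) Γ(x+1/2)
  have hs : 0 ≤ Real.sqrt (x + 1/2) := Real.sqrt_nonneg _
  have hsn : 0 ≤ Real.sqrt (n:ℝ) := Real.sqrt_nonneg _
  nlinarith [mul_le_mul_of_nonneg_left hlow (mul_nonneg hsn hπpos.le),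
    mul_le_mul_of_nonneg_right hkey h1.le, mul_pos hπpos h2]

lemma aux_kappa_le' {n : ℕ} (hn : 2 ≤ n) :
    kappaConst n ≤ Real.sqrt (((n:ℝ) - 1)/2) / Real.sqrt Real.pi := by
  have hn2 : (2:ℝ) ≤ n := by exact_mod_cast hn
  set x : ℝ := ((n:ℝ) - 1)/2 with hxdef
  have hx : 0 < x := by rw [hxdef]; linarith
  have hhalf : (n:ℝ)/2 = x + 1/2 := by rw [hxdef]; ring
  have h2 : 0 < Real.Gamma x := Real.Gamma_pos_of_pos hx
  have hup := aux_gamma_ratio_upper hx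
  rw [kappaConst, hhalf]
  rw [div_le_div_iff₀ (by positivity) (Real.sqrt_pos.2 Real.pi_pos)]
  calc Real.Gamma (x + 1/2) * Real.sqrt Real.pi ≤ (Real.sqrt x * Real.Gamma x) * Real.sqrt Real.pi := by
        apply mul_le_mul_of_nonneg_right hup (Real.sqrt_nonneg _)
    _ = Real.sqrt x * (Real.sqrt Real.pi * Real.Gamma x) := by ring

lemma aux_kappa_pos {n : ℕ} (hn : 2 ≤ n) : 0 < kappaConst n := by
  have h := aux_kappa_ge hn
  have : (0:ℝ) < Real.sqrt n / 6 := by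
    apply div_pos (Real.sqrt_pos.2 (by exact_mod_cast Nat.lt_of_lt_of_le Nat.zero_lt_two hn)) (by norm_num)
  linarith

lemma aux_f_intInt {n : ℕ} (hn : 3 ≤ n) {s t : ℝ} (hs : -1 ≤ s) (ht : t ≤ 1) (hst : s ≤ t) :
    IntervalIntegrable (fun u : ℝ => (1 - u ^ 2) ^ (((n:ℝ) - 3) / 2)) volume s t := by
  have hc : (0:ℝ) ≤ ((n:ℝ) - 3)/2 := by
    have : (3:ℝ) ≤ n := by exact_mod_cast hn
    linarith
  rw [intervalIntegrable_iff_integrableOn_Icc_of_le hst]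
  apply Measure.integrableOn_of_bounded (M := 1) (measure_Icc_lt_top).ne
  · apply Measurable.aestronglyMeasurable; fun_prop
  · rw [ae_restrict_iff' measurableSet_Icc]
    filter_upwards with u hu
    have h1 : 0 ≤ 1 - u^2 := by nlinarith [hu.1, hu.2]
    have h2 : 1 - u^2 ≤ 1 := by nlinarith [hu.1, hu.2]
    rw [Real.norm_eq_abs, abs_of_nonneg (Real.rpow_nonneg h1 _)]
    exact Real.rpow_le_one h1 h2 hc

lemma aux_f_nonneg {n : ℕ} {u : ℝ} (h1 : -1 ≤ u) (h2 : u ≤ 1) :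
    0 ≤ (1 - u ^ 2) ^ (((n:ℝ) - 3) / 2) :=
  Real.rpow_nonneg (by nlinarith) _

lemma aux_Q_nonneg {n : ℕ} (hn : 3 ≤ n) {s : ℝ} (hs : -1 ≤ s) (hs1 : s ≤ 1) :
    0 ≤ Qfun n s := by
  apply mul_nonneg (aux_kappa_pos (by omega)).le
  apply intervalIntegral.integral_nonneg hs1
  intro u hu
  exact aux_f_nonneg (le_trans hs hu.1) hu.2

lemma aux_Q_global {n : ℕ} (hn : 6 ≤ n) {s : ℝ} (hs : -1 ≤ s) (hs1 : s ≤ 1) :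
    Qfun n s ≤ 1.9 := by
  have hn6 : (6:ℝ) ≤ n := by exact_mod_cast hn
  set c : ℝ := ((n:ℝ) - 3)/2 with hcdef
  have hc : (0:ℝ) < c := by rw [hcdef]; linarith
  -- step 1 : ∫_s^1 ≤ ∫_{-1}^1
  have h1 : (∫ t in s..1, (1 - t ^ 2) ^ c) ≤ ∫ t in (-1:ℝ)..1, (1 - t ^ 2) ^ c := by
    apply intervalIntegral.integral_mono_interval hs hs1 le_rfl
    · filter_upwards [ae_restrict_mem measurableSet_Ioc] with u hu
      exact aux_f_nonneg hu.1.le hu.2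
    · exact aux_f_intInt (by omega) le_rfl le_rfl (by norm_num)
  -- step 2 : ∫_{-1}^1 f ≤ ∫_{-1}^1 gaussian
  have h2 : (∫ t in (-1:ℝ)..1, (1 - t ^ 2) ^ c) ≤ ∫ t in (-1:ℝ)..1, Real.exp (-c * t^2) := by
    apply intervalIntegral.integral_mono_on (by norm_num)
      (aux_f_intInt (by omega) le_rfl le_rfl (by norm_num))
      ((integrable_exp_neg_mul_sq hc).intervalIntegrable)
    intro t ht
    have hb : 0 ≤ 1 - t^2 := by nlinarith [ht.1, ht.2]
    calc (1 - t^2) ^ c ≤ (Real.exp (-t^2)) ^ c := by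
          apply Real.rpow_le_rpow hb _ hc.le
          have := Real.add_one_le_exp (-t^2); linarith
      _ = Real.exp (-c * t^2) := by
          rw [← Real.exp_mul]; ring_nf
  -- step 3 : ≤ ∫_ℝ = √(π/c)
  have h3 : (∫ t in (-1:ℝ)..1, Real.exp (-c * t^2)) ≤ Real.sqrt (Real.pi / c) := by
    rw [intervalIntegral.integral_of_le (by norm_num : (-1:ℝ) ≤ 1)]
    rw [← integral_gaussian]
    exact setIntegral_le_integral (integrable_exp_neg_mul_sq hc)
      (Filter.Eventually.of_forall fun t => (Real.exp_pos _).le)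
  have hκ := aux_kappa_le' (show 2 ≤ n by omega)
  have hκ0 := (aux_kappa_pos (show 2 ≤ n by omega)).le
  have hint0 : 0 ≤ ∫ t in s..1, (1 - t ^ 2) ^ c := by
    apply intervalIntegral.integral_nonneg hs1
    intro u hu; exact aux_f_nonneg (le_trans hs hu.1) hu.2
  have hchain : Qfun n s ≤ (Real.sqrt (((n:ℝ) - 1)/2) / Real.sqrt Real.pi) * Real.sqrt (Real.pi / c) := by
    rw [Qfun]
    apply mul_le_mul hκ (by linarith) hint0 (by positivity)
  refine hchain.trans ?_
  have hπs : (0:ℝ) < Real.sqrt Real.pi := Real.sqrt_pos.2 Real.pi_pos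
  have e1 : (Real.sqrt (((n:ℝ) - 1)/2) / Real.sqrt Real.pi) * Real.sqrt (Real.pi / c)
      = Real.sqrt ((((n:ℝ) - 1)/2) / c) := by
    rw [Real.sqrt_div Real.pi_pos.le c, Real.sqrt_div (by linarith : (0:ℝ) ≤ ((n:ℝ)-1)/2) c]
    field_simp
  rw [e1]
  have hA : (((n:ℝ) - 1)/2) / c ≤ 3.61 := by
    rw [hcdef, div_le_iff₀ (by linarith : (0:ℝ) < ((n:ℝ)-3)/2)]
    nlinarith
  calc Real.sqrt ((((n:ℝ) - 1)/2) / c) ≤ Real.sqrt 3.61 := Real.sqrt_le_sqrt hA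
    _ = 1.9 := by
        rw [show (3.61:ℝ) = (1.9)^2 by norm_num, Real.sqrt_sq (by norm_num)]


lemma aux_Q_upper {n : ℕ} (hn : 6 ≤ n) {σ : ℝ} (hσ0 : 0 ≤ σ) (hσ1 : σ ≤ 1) :
    Qfun n σ ≤ Real.sqrt n * (1 - σ ^ 2) ^ (((n:ℝ) - 3) / 2) := by
  set c : ℝ := ((n:ℝ) - 3)/2 with hcdef
  have hn6 : (6:ℝ) ≤ n := by exact_mod_cast hn
  have hc : (0:ℝ) < c := by rw [hcdef]; linarith
  have hb : 0 ≤ 1 - σ^2 := by nlinarith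
  have h1 : (∫ t in σ..1, (1 - t ^ 2) ^ c) ≤ (1 - σ) * (1 - σ^2) ^ c := by
    have := intervalIntegral.integral_mono_on (μ := volume) hσ1
      (aux_f_intInt (n := n) (by omega) (by linarith) le_rfl hσ1)
      (intervalIntegrable_const (c := (1 - σ^2) ^ c))
      (fun t ht => by
        have h2 : t^2 ≥ σ^2 := by nlinarith [ht.1, ht.2]
        apply Real.rpow_le_rpow (by nlinarith [ht.1, ht.2]) (by linarith) hc.le)
    rw [intervalIntegral.integral_const, smul_eq_mul] at this
    linarith
  have h2 : (1 - σ) * (1 - σ^2) ^ c ≤ (1 - σ^2) ^ c := by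
    nlinarith [Real.rpow_nonneg hb c]
  have hκ := aux_kappa_le (show 2 ≤ n by omega)
  have hκ0 := (aux_kappa_pos (show 2 ≤ n by omega)).le
  have hint0 : 0 ≤ ∫ t in σ..1, (1 - t ^ 2) ^ c := by
    apply intervalIntegral.integral_nonneg hσ1
    intro u hu; exact aux_f_nonneg (by linarith [hu.1]) hu.2
  rw [Qfun]
  apply mul_le_mul hκ (by linarith) hint0 (Real.sqrt_nonneg _)

lemma aux_Q_lower {n : ℕ} (hn : 6 ≤ n) {a u : ℝ} (ha1 : a ≤ 1) (hu0 : 0 ≤ u) (hua : u ≤ a) :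
    Real.sqrt n / 6 * (u / 2) * ((1 - a^2) + a * (u/2)) ^ (((n:ℝ) - 3) / 2)
      ≤ Qfun n (a - u) := by
  set c : ℝ := ((n:ℝ) - 3)/2 with hcdef
  have hn6 : (6:ℝ) ≤ n := by exact_mod_cast hn
  have hc : (0:ℝ) < c := by rw [hcdef]; linarith
  have ha0 : 0 ≤ a := le_trans hu0 hua
  have hval : 0 ≤ (1 - a^2) + a * (u/2) := by nlinarith
  -- split the integral
  have hint1 : IntervalIntegrable (fun t : ℝ => (1 - t ^ 2) ^ c) volume (a - u) (a - u/2) :=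
    aux_f_intInt (n := n) (by omega) (by linarith) (by linarith) (by linarith)
  have hint2 : IntervalIntegrable (fun t : ℝ => (1 - t ^ 2) ^ c) volume (a - u/2) 1 :=
    aux_f_intInt (n := n) (by omega) (by linarith) le_rfl (by linarith)
  have hsplit : (∫ t in (a-u)..1, (1 - t ^ 2) ^ c)
      = (∫ t in (a-u)..(a-u/2), (1 - t ^ 2) ^ c) + ∫ t in (a-u/2)..1, (1 - t ^ 2) ^ c :=
    (intervalIntegral.integral_add_adjacent_intervals hint1 hint2).symm
  have hpos2 : 0 ≤ ∫ t in (a-u/2)..1, (1 - t ^ 2) ^ c := by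
    apply intervalIntegral.integral_nonneg (by linarith)
    intro t ht; exact aux_f_nonneg (by linarith [ht.1]) ht.2
  have hlow1 : (u/2) * ((1 - a^2) + a * (u/2)) ^ c
      ≤ ∫ t in (a-u)..(a-u/2), (1 - t ^ 2) ^ c := by
    have hmono := intervalIntegral.integral_mono_on (μ := volume) (by linarith : a - u ≤ a - u/2)
      (intervalIntegrable_const (c := ((1 - a^2) + a * (u/2)) ^ c)) hint1
      (fun t ht => by
        have ht1 : a - u ≤ t := ht.1
        have ht2 : t ≤ a - u/2 := ht.2
        have h0t : 0 ≤ t := by linarith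
        have hsq : t^2 ≤ (a - u/2)^2 := by nlinarith
        have hkey : (1 - a^2) + a * (u/2) ≤ 1 - t^2 := by nlinarith
        exact Real.rpow_le_rpow hval hkey hc.le)
    rw [intervalIntegral.integral_const, smul_eq_mul] at hmono
    calc (u/2) * ((1 - a^2) + a * (u/2)) ^ c
        = (a - u/2 - (a - u)) * ((1 - a^2) + a * (u/2)) ^ c := by ring_nf
      _ ≤ _ := hmono
  have hκ := aux_kappa_ge (show 2 ≤ n by omega)
  have hκ0 : (0:ℝ) ≤ Real.sqrt n / 6 := by positivity
  have hI0 : 0 ≤ (u/2) * ((1 - a^2) + a * (u/2)) ^ c := by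
    apply mul_nonneg (by linarith) (Real.rpow_nonneg hval _)
  rw [Qfun, hsplit]
  calc Real.sqrt n / 6 * (u / 2) * ((1 - a^2) + a * (u/2)) ^ c
      = (Real.sqrt n / 6) * ((u / 2) * ((1 - a^2) + a * (u/2)) ^ c) := by ring
    _ ≤ kappaConst n * ((∫ t in (a-u)..(a-u/2), (1 - t ^ 2) ^ c) + ∫ t in (a-u/2)..1, (1 - t ^ 2) ^ c) := by
        apply mul_le_mul hκ (by linarith) hI0 (aux_kappa_pos (by omega)).le

lemma aux_exp_half {x : ℝ} (h0 : 0 ≤ x) (h1 : x ≤ 1) : Real.exp (x/2) ≤ 1 + x := by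
  have h2 : (0:ℝ) < 1 - x/2 := by linarith
  have h3 : 1 - x/2 ≤ Real.exp (-(x/2)) := by
    have := Real.add_one_le_exp (-(x/2)); linarith
  have h4 : Real.exp (x/2) = (Real.exp (-(x/2)))⁻¹ := by
    rw [← Real.exp_neg]; ring_nf
  rw [h4]
  have h5 : (Real.exp (-(x/2)))⁻¹ ≤ (1 - x/2)⁻¹ := by
    apply inv_anti₀ h2 h3
  apply h5.trans
  rw [inv_le_iff_one_le_mul₀ h2]
  nlinarith

lemma aux_tail (μ : Measure ℝ) [IsProbabilityMeasure μ] (n : ℕ) (R a b γ u₀ : ℝ)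
    (hR : 0 < R) (hb : b = (2:ℝ)^(-R))
    (ha2 : a^2 = 1 - b^2) (ha0 : 0 < a) (ha1 : a ≤ 1)
    (hγ : γ = a / (16*b^2))
    (hu₀ : u₀ = min a (b^2/a))
    (hn6 : 6 ≤ n)
    (hnR : 1 ≤ (n:ℝ) * R)
    (hμc : μ (Set.Icc (-1 : ℝ) 1)ᶜ = 0)
    (hcdf : ∀ s ∈ Set.Icc (-1:ℝ) 1,
      μ (Set.Iic s) = ENNReal.ofReal ((1 - Qfun n s) ^ numCodewords n R))
    (hm1 : 24 * γ * n ≤ Real.exp (γ * Real.sqrt n))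
    (hm2 : (48 * γ / u₀) * n ≤ Real.exp ((γ * u₀) * Real.sqrt n))
    (hm3 : 40 * γ * n ≤ Real.exp ((R * Real.log 2) * Real.sqrt n))
    (hm4 : ((2:ℝ)^(3*R)) * n ≤ Real.exp ((3*γ) * Real.sqrt n))
    (u : ℝ) (hu : 1 ≤ u * Real.sqrt n) :
    μ {s : ℝ | u ≤ |s - a|} ≤ ENNReal.ofReal (2 * Real.exp (-(γ * (n:ℝ) * u))) := by
  have hn6' : (6:ℝ) ≤ n := by exact_mod_cast hn6
  have hn0 : (0:ℝ) < n := by linarith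
  have hsn : 0 < Real.sqrt n := Real.sqrt_pos.2 hn0
  have hsn1 : 1 ≤ Real.sqrt n := by
    rw [show (1:ℝ) = Real.sqrt 1 by simp]
    exact Real.sqrt_le_sqrt (by linarith : (1:ℝ) ≤ n)
  have hb0 : 0 < b := by rw [hb]; positivity
  have hb1 : b < 1 := by
    rw [hb]; exact Real.rpow_lt_one_of_one_lt_of_neg one_lt_two (by linarith)
  have hγ0 : 0 < γ := by rw [hγ]; positivity
  have hu₀0 : 0 < u₀ := by rw [hu₀]; apply lt_min ha0 (by positivity)
  have hu₀a : u₀ ≤ a := by rw [hu₀]; exact min_le_left _ _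
  have hu₀b : u₀ * a ≤ b^2 := by
    have h := min_le_right a (b^2/a)
    rw [← hu₀] at h
    calc u₀ * a ≤ (b^2/a) * a := by apply mul_le_mul_of_nonneg_right h ha0.le
      _ = b^2 := by field_simp
  have hu0 : 0 < u := by
    by_contra h
    push_neg at h
    have : u * Real.sqrt n ≤ 0 := mul_nonpos_of_nonpos_of_nonneg h hsn.le
    linarith
  have hnu : Real.sqrt n ≤ (n:ℝ) * u := by
    have h1 : Real.sqrt n * 1 ≤ Real.sqrt n * (u * Real.sqrt n) :=
      mul_le_mul_of_nonneg_left hu hsn.le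
    have h2 : Real.sqrt n * (u * Real.sqrt n) = (Real.sqrt n * Real.sqrt n) * u := by ring
    have h3 := Real.mul_self_sqrt hn0.le
    rw [h2, h3] at h1
    linarith
  set c : ℝ := ((n:ℝ)-3)/2 with hcdef
  have hn6' : (6:ℝ) ≤ n := by exact_mod_cast hn6
  have hc0 : 0 < c := by rw [hcdef]; linarith
  have hc4 : (n:ℝ)/4 ≤ c := by rw [hcdef]; linarith
  set M : ℕ := numCodewords n R with hMdef
  have hM1 : (M:ℝ) ≤ (2:ℝ)^((n:ℝ)*R) := Nat.floor_le (by positivity)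
  have h2nR : (2:ℝ) ≤ (2:ℝ)^((n:ℝ)*R) := by
    calc (2:ℝ) = (2:ℝ)^(1:ℝ) := (Real.rpow_one 2).symm
      _ ≤ (2:ℝ)^((n:ℝ)*R) := Real.rpow_le_rpow_of_exponent_le one_le_two hnR
  have hM2 : (2:ℝ)^((n:ℝ)*R)/2 ≤ (M:ℝ) := by
    have := Nat.lt_floor_add_one ((2:ℝ)^((n:ℝ)*R))
    have h : (2:ℝ)^((n:ℝ)*R) - 1 ≤ (M:ℝ) := by
      rw [hMdef, numCodewords]; push_cast at this ⊢; linarith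
    linarith
  have hM0 : (0:ℝ) ≤ M := Nat.cast_nonneg M
  -- b^2 as rpow
  have hb2 : b^2 = (2:ℝ)^(-(2*R)) := by
    rw [hb, ← Real.rpow_natCast ((2:ℝ)^(-R)) 2, ← Real.rpow_mul (by norm_num : (0:ℝ) ≤ 2)]
    congr 1; push_cast; ring
  have hb2c : (b^2)^c = (2:ℝ)^(-(2*R)*c) := by
    rw [hb2, ← Real.rpow_mul (by norm_num : (0:ℝ) ≤ 2)]
  have hMbc : (M:ℝ) * (b^2)^c ≤ (2:ℝ)^(3*R) := by
    rw [hb2c]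
    calc (M:ℝ) * (2:ℝ)^(-(2*R)*c) ≤ (2:ℝ)^((n:ℝ)*R) * (2:ℝ)^(-(2*R)*c) := by
          apply mul_le_mul_of_nonneg_right hM1 (by positivity)
      _ = (2:ℝ)^((n:ℝ)*R + -(2*R)*c) := (Real.rpow_add (by norm_num) _ _).symm
      _ = (2:ℝ)^(3*R) := by
          congr 1; rw [hcdef]; ring
  have hMbc2 : (1:ℝ)/2 ≤ (M:ℝ) * (b^2)^c := by
    have h23R : (1:ℝ) ≤ (2:ℝ)^(3*R) := Real.one_le_rpow one_le_two (by positivity)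
    calc (1:ℝ)/2 ≤ (2:ℝ)^(3*R)/2 := by linarith
      _ = ((2:ℝ)^((n:ℝ)*R)/2) * (2:ℝ)^(-(2*R)*c) := by
          rw [div_mul_eq_mul_div, ← Real.rpow_add (by norm_num : (0:ℝ) < 2)]
          congr 2; rw [hcdef]; ring
      _ ≤ (M:ℝ) * (2:ℝ)^(-(2*R)*c) := by
          apply mul_le_mul_of_nonneg_right hM2 (by positivity)
      _ = (M:ℝ) * (b^2)^c := by rw [hb2c]
  by_cases hu2 : 2 < u
  · -- empty within the support
    have hsub : {s : ℝ | u ≤ |s - a|} ⊆ (Set.Icc (-1:ℝ) 1)ᶜ := by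
      intro s hs
      simp only [Set.mem_setOf_eq] at hs
      intro hmem
      have h1 : |s - a| ≤ 2 := by
        rw [abs_le]; constructor
        · linarith [hmem.1]
        · linarith [hmem.2]
      linarith
    calc μ {s : ℝ | u ≤ |s - a|} ≤ μ (Set.Icc (-1:ℝ) 1)ᶜ := measure_mono hsub
      _ = 0 := hμc
      _ ≤ _ := zero_le
  push_neg at hu2
  -- upper tail
  have hUP : μ (Set.Ioi (a + u/2)) ≤ ENNReal.ofReal (Real.exp (-(γ * (n:ℝ) * u))) := by
    by_cases hσ1 : a + u/2 ≤ 1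
    · set σ : ℝ := a + u/2 with hσdef
      have hσ0 : 0 ≤ σ := by rw [hσdef]; linarith
      have hσm1 : -1 ≤ σ := by linarith
      set q : ℝ := Qfun n σ with hqdef
      have hq0 : 0 ≤ q := aux_Q_nonneg (by omega) hσm1 hσ1
      have hq19 : q ≤ 1.9 := aux_Q_global hn6 hσm1 hσ1
      have h1σ : 0 ≤ 1 - σ^2 := by
        have h := mul_nonneg (by linarith : (0:ℝ) ≤ 1-σ) (by linarith : (0:ℝ) ≤ 1+σ)
        have h2 : (1-σ)*(1+σ) = 1 - σ^2 := by ring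
        linarith
      have hMq : (M:ℝ) * q ≤ Real.exp (-(γ * (n:ℝ) * u)) := by
        have hstep : 1 - σ^2 ≤ b^2 * Real.exp (-(a*u/b^2)) := by
          have e1 : 1 - σ^2 ≤ b^2 - a*u := by
            rw [hσdef]
            have hexpand : (a+u/2)^2 = a^2 + a*u + u^2/4 := by ring
            have hu2' : 0 ≤ u^2 := sq_nonneg u
            linarith [ha2]
          have e2 : b^2 - a*u = b^2 * (1 - a*u/b^2) := by field_simp
          have e3 : 1 - a*u/b^2 ≤ Real.exp (-(a*u/b^2)) := by
            have := Real.add_one_le_exp (-(a*u/b^2)); linarith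
          calc 1 - σ^2 ≤ b^2 * (1 - a*u/b^2) := by rw [← e2]; exact e1
            _ ≤ b^2 * Real.exp (-(a*u/b^2)) := by
                apply mul_le_mul_of_nonneg_left e3 (by positivity)
        have hrp : (1-σ^2)^c ≤ (b^2)^c * Real.exp (-(a*u/b^2) * c) := by
          calc (1-σ^2)^c ≤ (b^2 * Real.exp (-(a*u/b^2)))^c :=
                Real.rpow_le_rpow h1σ hstep hc0.le
            _ = (b^2)^c * Real.exp (-(a*u/b^2) * c) := by
                rw [Real.mul_rpow (by positivity) (Real.exp_pos _).le, ← Real.exp_mul]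
        have hexp2 : Real.exp (-(a*u/b^2) * c) ≤ Real.exp (-(4*γ*(n:ℝ)*u)) := by
          apply Real.exp_le_exp.2
          have h4 : 4*γ*(n:ℝ)*u = (a*u/b^2) * ((n:ℝ)/4) := by rw [hγ]; field_simp; ring
          have h5 : (a*u/b^2) * ((n:ℝ)/4) ≤ (a*u/b^2) * c := by
            apply mul_le_mul_of_nonneg_left hc4 (by positivity)
          linarith
        have hq_up : q ≤ Real.sqrt n * (1-σ^2)^c := aux_Q_upper hn6 hσ0 hσ1
        have hBig : Real.sqrt n * (2:ℝ)^(3*R) ≤ Real.exp (3*γ*((n:ℝ)*u)) := by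
          calc Real.sqrt n * (2:ℝ)^(3*R) ≤ (n:ℝ) * (2:ℝ)^(3*R) := by
                apply mul_le_mul_of_nonneg_right _ (by positivity)
                calc Real.sqrt n ≤ Real.sqrt n * Real.sqrt n :=
                      le_mul_of_one_le_left hsn.le hsn1
                  _ = (n:ℝ) := Real.mul_self_sqrt hn0.le
            _ = (2:ℝ)^(3*R) * n := by ring
            _ ≤ Real.exp ((3*γ) * Real.sqrt n) := hm4
            _ ≤ Real.exp (3*γ*((n:ℝ)*u)) := by
                apply Real.exp_le_exp.2
                apply mul_le_mul_of_nonneg_left hnu (by positivity)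
        calc (M:ℝ) * q ≤ (M:ℝ) * (Real.sqrt n * (1-σ^2)^c) := by
              apply mul_le_mul_of_nonneg_left hq_up hM0
          _ = Real.sqrt n * ((M:ℝ) * (1-σ^2)^c) := by ring
          _ ≤ Real.sqrt n * ((M:ℝ) * ((b^2)^c * Real.exp (-(a*u/b^2) * c))) := by
              apply mul_le_mul_of_nonneg_left _ hsn.le
              apply mul_le_mul_of_nonneg_left hrp hM0
          _ = ((M:ℝ) * (b^2)^c) * (Real.sqrt n * Real.exp (-(a*u/b^2) * c)) := by ring
          _ ≤ (2:ℝ)^(3*R) * (Real.sqrt n * Real.exp (-(4*γ*(n:ℝ)*u))) := by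
              apply mul_le_mul hMbc _ (by positivity) (by positivity)
              apply mul_le_mul_of_nonneg_left hexp2 hsn.le
          _ = (Real.sqrt n * (2:ℝ)^(3*R)) * Real.exp (-(4*γ*(n:ℝ)*u)) := by ring
          _ ≤ Real.exp (3*γ*((n:ℝ)*u)) * Real.exp (-(4*γ*(n:ℝ)*u)) := by
              apply mul_le_mul_of_nonneg_right hBig (Real.exp_pos _).le
          _ = Real.exp (-(γ * (n:ℝ) * u)) := by
              rw [← Real.exp_add]; congr 1; ring
      have hMq1 : (M:ℝ) * q ≤ 1 := by
        apply hMq.trans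
        calc Real.exp (-(γ * (n:ℝ) * u)) ≤ Real.exp 0 := by
              exact Real.exp_le_exp.2 (neg_nonpos.2 (by positivity))
          _ = 1 := Real.exp_zero
      have hBer : 1 - (M:ℝ)*q ≤ (1-q)^M := by
        have h := one_add_mul_le_pow (show (-2:ℝ) ≤ -q by linarith) M
        calc 1 - (M:ℝ)*q = 1 + (M:ℝ)*(-q) := by ring
          _ ≤ (1 + -q)^M := h
          _ = (1-q)^M := by ring_nf
      have hIic : μ (Set.Iic σ) = ENNReal.ofReal ((1 - q)^M) := hcdf σ ⟨hσm1, hσ1⟩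
      have hcompl : μ (Set.Ioi σ) = 1 - μ (Set.Iic σ) := by
        rw [← Set.compl_Iic, measure_compl measurableSet_Iic (measure_ne_top μ _), measure_univ]
      rw [hcompl, hIic]
      calc 1 - ENNReal.ofReal ((1-q)^M) ≤ 1 - ENNReal.ofReal (1 - (M:ℝ)*q) := by
            apply tsub_le_tsub_left (ENNReal.ofReal_le_ofReal hBer) _
        _ ≤ ENNReal.ofReal ((M:ℝ)*q) := by
            have he : ENNReal.ofReal (1 - (1 - (M:ℝ)*q)) =
                ENNReal.ofReal 1 - ENNReal.ofReal (1 - (M:ℝ)*q) :=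
              ENNReal.ofReal_sub 1 (by linarith)
            have he2 : (1:ℝ) - (1 - (M:ℝ)*q) = (M:ℝ)*q := by ring
            rw [he2] at he
            rw [← ENNReal.ofReal_one, ← he]
        _ ≤ ENNReal.ofReal (Real.exp (-(γ * (n:ℝ) * u))) := ENNReal.ofReal_le_ofReal hMq
    · push_neg at hσ1
      have hsub : Set.Ioi (a + u/2) ⊆ (Set.Icc (-1:ℝ) 1)ᶜ := by
        intro s hs hmem
        simp only [Set.mem_Ioi] at hs
        have := hmem.2
        linarith
      calc μ (Set.Ioi (a + u/2)) ≤ μ (Set.Icc (-1:ℝ) 1)ᶜ := measure_mono hsub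
        _ = 0 := hμc
        _ ≤ _ := zero_le
  -- lower tail
  have hLO : μ (Set.Iic (a - u)) ≤ ENNReal.ofReal (Real.exp (-(γ * (n:ℝ) * u))) := by
    set u' : ℝ := min u u₀ with hu'def
    have hu'0 : 0 < u' := lt_min hu0 hu₀0
    have hu'u : u' ≤ u := min_le_left _ _
    have hu'₀ : u' ≤ u₀ := min_le_right _ _
    have hu'a : u' ≤ a := hu'₀.trans hu₀a
    set σ' : ℝ := a - u' with hσ'def
    have hσ'0 : 0 ≤ σ' := by rw [hσ'def]; linarith
    have hσ'1 : σ' ≤ 1 := by rw [hσ'def]; linarith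
    have hσ'm1 : -1 ≤ σ' := by linarith
    set q' : ℝ := Qfun n σ' with hq'def
    have hq'0 : 0 ≤ q' := aux_Q_nonneg (by omega) hσ'm1 hσ'1
    have hq'19 : q' ≤ 1.9 := aux_Q_global hn6 hσ'm1 hσ'1
    have hmono : μ (Set.Iic (a - u)) ≤ μ (Set.Iic σ') := by
      apply measure_mono
      apply Set.Iic_subset_Iic.2
      rw [hσ'def]; linarith
    have hIic : μ (Set.Iic σ') = ENNReal.ofReal ((1 - q')^M) := hcdf σ' ⟨hσ'm1, hσ'1⟩
    have hkey : (1 - q')^M ≤ Real.exp (-(γ * (n:ℝ) * u)) := by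
      by_cases hq'1 : q' ≤ 1
      · -- main branch : (1-q')^M ≤ exp(-M q') and M q' ≥ γ n u
        have hMq' : γ * (n:ℝ) * u ≤ (M:ℝ) * q' := by
          -- lower bound on q'
          have hQlow := aux_Q_lower hn6 ha1 hu'0.le hu'a
          -- rewrite 1 - a^2 = b^2
          have hba : 1 - a^2 = b^2 := by linarith
          rw [hba] at hQlow
          -- (b^2 + a*(u'/2))^c = (b^2)^c * (1+x)^c ≥ (b^2)^c * exp(γ n u')
          set x : ℝ := a*u'/(2*b^2) with hxdef
          have hx0 : 0 ≤ x := by positivity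
          have hx1 : x ≤ 1 := by
            rw [hxdef, div_le_one (by positivity)]
            have h1 := mul_le_mul_of_nonneg_left hu'₀ ha0.le
            have h2 : (0:ℝ) ≤ b^2 := by positivity
            linarith [hu₀b]
          have hfact : b^2 + a*(u'/2) = b^2 * (1+x) := by
            rw [hxdef]; field_simp
          have hrw : (b^2 + a*(u'/2))^c = (b^2)^c * (1+x)^c := by
            rw [hfact, Real.mul_rpow (by positivity) (by linarith)]
          have hex : Real.exp (γ * (n:ℝ) * u') ≤ (1+x)^c := by
            have h1 : Real.exp (x/2) ≤ 1 + x := aux_exp_half hx0 hx1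
            have h2 : (Real.exp (x/2))^c ≤ (1+x)^c :=
              Real.rpow_le_rpow (Real.exp_pos _).le h1 hc0.le
            have h3 : (Real.exp (x/2))^c = Real.exp (x/2 * c) := by
              rw [← Real.exp_mul]
            have h4 : γ * (n:ℝ) * u' ≤ x/2 * c := by
              have e1 : x/2 * ((n:ℝ)/4) ≤ x/2 * c := by
                apply mul_le_mul_of_nonneg_left hc4 (by positivity)
              have e2 : γ * (n:ℝ) * u' = x/2 * ((n:ℝ)/4) := by
                rw [hxdef, hγ]; field_simp; ring
              linarith
            calc Real.exp (γ * (n:ℝ) * u') ≤ Real.exp (x/2 * c) := Real.exp_le_exp.2 h4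
              _ = (Real.exp (x/2))^c := h3.symm
              _ ≤ (1+x)^c := h2
          -- M q' ≥ (M (b²)^c) * (√n u'/12) * (1+x)^c ≥ (√n u'/24) exp(γ n u')
          have hMq'1 : (Real.sqrt n * u'/24) * Real.exp (γ * (n:ℝ) * u') ≤ (M:ℝ) * q' := by
            have hT : (M:ℝ) * (Real.sqrt n / 6 * (u' / 2) * ((b^2) + a * (u'/2)) ^ c) ≤ (M:ℝ) * q' := by
              apply mul_le_mul_of_nonneg_left hQlow hM0
            have hTT : (Real.sqrt n * u'/24) * Real.exp (γ * (n:ℝ) * u')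
                ≤ (M:ℝ) * (Real.sqrt n / 6 * (u' / 2) * ((b^2) + a * (u'/2)) ^ c) := by
              rw [hrw]
              have e3 : (M:ℝ) * (Real.sqrt n / 6 * (u' / 2) * ((b^2)^c * (1+x)^c))
                  = ((M:ℝ) * (b^2)^c) * (Real.sqrt n * u'/12) * (1+x)^c := by ring
              rw [e3]
              calc (Real.sqrt n * u'/24) * Real.exp (γ * (n:ℝ) * u')
                  = (1/2) * (Real.sqrt n * u'/12) * Real.exp (γ * (n:ℝ) * u') := by ring
                _ ≤ ((M:ℝ) * (b^2)^c) * (Real.sqrt n * u'/12) * Real.exp (γ * (n:ℝ) * u') := by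
                    apply mul_le_mul_of_nonneg_right _ (Real.exp_pos _).le
                    apply mul_le_mul_of_nonneg_right hMbc2 (by positivity)
                _ ≤ ((M:ℝ) * (b^2)^c) * (Real.sqrt n * u'/12) * (1+x)^c := by
                    apply mul_le_mul_of_nonneg_left hex
                    positivity
            exact hTT.trans hT
          -- now the two cases
          by_cases huu₀ : u ≤ u₀
          · have hu'is : u' = u := min_eq_left huu₀
            rw [hu'is] at hMq'1
            have hE : 24 * γ * (n:ℝ) ≤ Real.exp (γ * (n:ℝ) * u) := by
              calc 24 * γ * (n:ℝ) ≤ Real.exp (γ * Real.sqrt n) := hm1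
                _ ≤ Real.exp (γ * (n:ℝ) * u) := by
                    apply Real.exp_le_exp.2
                    calc γ * Real.sqrt n ≤ γ * ((n:ℝ)*u) := by
                          apply mul_le_mul_of_nonneg_left hnu hγ0.le
                      _ = γ * (n:ℝ) * u := by ring
            calc γ * (n:ℝ) * u = (Real.sqrt n * u/24) * (24 * γ * (n:ℝ)) / Real.sqrt n := by
                  field_simp
              _ ≤ (Real.sqrt n * u/24) * (24 * γ * (n:ℝ)) := by
                  apply div_le_self (by positivity) hsn1
              _ ≤ (Real.sqrt n * u/24) * Real.exp (γ * (n:ℝ) * u) := by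
                  apply mul_le_mul_of_nonneg_left hE (by positivity)
              _ ≤ (M:ℝ) * q' := hMq'1
          · push_neg at huu₀
            have hu'is : u' = u₀ := min_eq_right huu₀.le
            rw [hu'is] at hMq'1
            have hE : (48 * γ / u₀) * (n:ℝ) ≤ Real.exp (γ * (n:ℝ) * u₀) := by
              calc (48 * γ / u₀) * (n:ℝ) ≤ Real.exp ((γ * u₀) * Real.sqrt n) := hm2
                _ ≤ Real.exp (γ * (n:ℝ) * u₀) := by
                    apply Real.exp_le_exp.2
                    have : Real.sqrt n ≤ (n:ℝ) := by
                      calc Real.sqrt n ≤ Real.sqrt n * Real.sqrt n :=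
                            le_mul_of_one_le_left hsn.le hsn1
                        _ = (n:ℝ) := Real.mul_self_sqrt hn0.le
                    calc (γ * u₀) * Real.sqrt n ≤ (γ * u₀) * (n:ℝ) := by
                          apply mul_le_mul_of_nonneg_left this (by positivity)
                      _ = γ * (n:ℝ) * u₀ := by ring
            calc γ * (n:ℝ) * u ≤ γ * (n:ℝ) * 2 := by
                  apply mul_le_mul_of_nonneg_left hu2 (by positivity)
              _ = (u₀/24) * ((48 * γ / u₀) * (n:ℝ)) := by field_simp; ring
              _ ≤ (u₀/24) * Real.exp (γ * (n:ℝ) * u₀) := by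
                  apply mul_le_mul_of_nonneg_left hE (by positivity)
              _ ≤ (Real.sqrt n * u₀/24) * Real.exp (γ * (n:ℝ) * u₀) := by
                  apply mul_le_mul_of_nonneg_right _ (Real.exp_pos _).le
                  have h1 := mul_le_mul_of_nonneg_left hsn1 hu₀0.le
                  linarith
              _ ≤ (M:ℝ) * q' := hMq'1
        -- conclude
        have h1q' : 0 ≤ 1 - q' := by linarith
        have hexpq : 1 - q' ≤ Real.exp (-q') := by
          have := Real.add_one_le_exp (-q'); linarith
        calc (1 - q')^M ≤ (Real.exp (-q'))^M := pow_le_pow_left₀ h1q' hexpq M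
          _ = Real.exp ((M:ℝ) * (-q')) := (Real.exp_nat_mul _ M).symm
          _ ≤ Real.exp (-(γ * (n:ℝ) * u)) := by
              apply Real.exp_le_exp.2; linarith [hMq']
      · -- q' > 1 branch
        push_neg at hq'1
        have habs : (1 - q')^M ≤ (9/10 : ℝ)^M := by
          calc (1 - q')^M ≤ |(1 - q')^M| := le_abs_self _
            _ = |1 - q'|^M := by rw [abs_pow]
            _ ≤ (9/10 : ℝ)^M := by
                apply pow_le_pow_left₀ (abs_nonneg _)
                rw [abs_of_neg (by linarith : 1 - q' < 0)]
                norm_num; linarith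
        have hM20 : 20 * γ * (n:ℝ) ≤ (M:ℝ) := by
          have h2r : (2:ℝ)^((n:ℝ)*R) = Real.exp ((n:ℝ)*R * Real.log 2) := by
            rw [Real.rpow_def_of_pos (by norm_num)]; ring_nf
          have hstep : Real.exp ((R * Real.log 2) * Real.sqrt n) ≤ (2:ℝ)^((n:ℝ)*R) := by
            rw [h2r]
            apply Real.exp_le_exp.2
            have hlog2 : 0 < Real.log 2 := Real.log_pos (by norm_num)
            have : Real.sqrt n ≤ (n:ℝ) := by
              calc Real.sqrt n ≤ Real.sqrt n * Real.sqrt n :=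
                    le_mul_of_one_le_left hsn.le hsn1
                _ = (n:ℝ) := Real.mul_self_sqrt hn0.le
            calc (R * Real.log 2) * Real.sqrt n ≤ (R * Real.log 2) * (n:ℝ) := by
                  apply mul_le_mul_of_nonneg_left this (by positivity)
              _ = (n:ℝ)*R * Real.log 2 := by ring
          have h40 : 40 * γ * (n:ℝ) ≤ (2:ℝ)^((n:ℝ)*R) := le_trans hm3 hstep
          linarith [hM2]
        have h910 : (9/10 : ℝ) ≤ Real.exp (-(1/10)) := by
          have := Real.add_one_le_exp (-(1/10 : ℝ)); linarith
        calc (1 - q')^M ≤ (9/10 : ℝ)^M := habs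
          _ ≤ (Real.exp (-(1/10)))^M := pow_le_pow_left₀ (by norm_num) h910 M
          _ = Real.exp ((M:ℝ) * (-(1/10))) := (Real.exp_nat_mul _ M).symm
          _ ≤ Real.exp (-(γ * (n:ℝ) * u)) := by
              apply Real.exp_le_exp.2
              have h1 := mul_le_mul_of_nonneg_left hu2 (mul_nonneg hγ0.le hn0.le)
              have h2 : γ * (n:ℝ) * u ≤ 2 * γ * (n:ℝ) := by linarith
              linarith [hM20]
    calc μ (Set.Iic (a - u)) ≤ μ (Set.Iic σ') := hmono
      _ = ENNReal.ofReal ((1 - q')^M) := hIic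
      _ ≤ ENNReal.ofReal (Real.exp (-(γ * (n:ℝ) * u))) := ENNReal.ofReal_le_ofReal hkey
  -- combine
  have hsub2 : {s : ℝ | u ≤ |s - a|} ⊆ Set.Iic (a - u) ∪ Set.Ioi (a + u/2) := by
    intro s hs
    simp only [Set.mem_setOf_eq] at hs
    rcases abs_cases (s - a) with ⟨h1, _⟩ | ⟨h1, _⟩
    · right; simp only [Set.mem_Ioi]; rw [h1] at hs; linarith
    · left; simp only [Set.mem_Iic]; rw [h1] at hs; linarith
  calc μ {s : ℝ | u ≤ |s - a|} ≤ μ (Set.Iic (a - u) ∪ Set.Ioi (a + u/2)) := measure_mono hsub2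
    _ ≤ μ (Set.Iic (a - u)) + μ (Set.Ioi (a + u/2)) := measure_union_le _ _
    _ ≤ ENNReal.ofReal (Real.exp (-(γ * (n:ℝ) * u))) + ENNReal.ofReal (Real.exp (-(γ * (n:ℝ) * u))) :=
        add_le_add hLO hUP
    _ = ENNReal.ofReal (2 * Real.exp (-(γ * (n:ℝ) * u))) := by
        rw [← ENNReal.ofReal_add (Real.exp_pos _).le (Real.exp_pos _).le]
        congr 1; ring

lemma aux_moment_bound (μ : Measure ℝ) [IsProbabilityMeasure μ] (G : ℝ → ℝ)
    (a γ K : ℝ) (n : ℕ) (p : ℝ)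
    (hγ0 : 0 < γ) (hK : 1 ≤ K) (hp : 1 ≤ p) (hpn : p ≤ n) (hn1 : 1 ≤ n)
    (ha0 : 0 ≤ a) (ha1 : a ≤ 1)
    (hG0 : ∀ s, 0 ≤ G s)
    (hae : ∀ᵐ s ∂μ, s ∈ Set.Icc (-1:ℝ) 1)
    (hGle : ∀ s ∈ Set.Icc (-1:ℝ) 1, G s ≤ K * (Real.sqrt n * |s - a|))
    (htail : ∀ j : ℕ, μ {s : ℝ | ((j:ℝ)+1) / Real.sqrt n ≤ |s - a|}
        ≤ ENNReal.ofReal (2 * Real.exp (-(γ * Real.sqrt n * ((j:ℝ)+1)))))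
    (hNsum : ((⌊2 * Real.sqrt n⌋₊ + 1 : ℕ) : ℝ) * Real.exp (-(γ * Real.sqrt n / 2)) ≤ 1) :
    (∫ s, G s ^ p ∂μ) ≤ 3 * K ^ p * ((max 1 (4/γ)) * Real.sqrt p) ^ p := by
  have hp0 : 0 < p := lt_of_lt_of_le one_pos hp
  have hn0 : (0:ℝ) < n := by exact_mod_cast hn1
  have hsn : 0 < Real.sqrt n := Real.sqrt_pos.2 hn0
  have hK0 : (0:ℝ) ≤ K := by linarith
  set N : ℕ := ⌊2 * Real.sqrt n⌋₊ + 1 with hNdef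
  set f : ℕ → ℝ := fun i => ((i:ℝ)+1)^p with hfdef
  set c : ℕ → ℝ := fun j => f (j+1) - f j with hcdef
  set A : ℕ → Set ℝ := fun j => {s : ℝ | ((j:ℝ)+1) / Real.sqrt n ≤ |s - a|} with hAdef
  have hmeas : ∀ j, MeasurableSet (A j) := by
    intro j
    exact (isClosed_le continuous_const ((continuous_id.sub continuous_const).abs)).measurableSet
  have hfmono : ∀ i j : ℕ, i ≤ j → f i ≤ f j := by
    intro i j hij
    apply Real.rpow_le_rpow (by positivity) (by push_cast; exact_mod_cast (by omega : i + 1 ≤ j + 1)) hp0.le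
  have hc0 : ∀ j, 0 ≤ c j := fun j => by
    simp only [hcdef, sub_nonneg]; exact hfmono j (j+1) (by omega)
  set bound : ℝ → ℝ := fun s =>
    K^p * (1 + ∑ j ∈ Finset.range N, (A j).indicator (fun _ => c j) s) with hbdef
  -- pointwise bound
  have hptwise : ∀ s ∈ Set.Icc (-1:ℝ) 1, G s ^ p ≤ bound s := by
    intro s hs
    set x : ℝ := Real.sqrt n * |s - a| with hxdef
    have hx0 : 0 ≤ x := by positivity
    have hGp : G s ^ p ≤ K^p * x^p := by
      rw [← Real.mul_rpow hK0 hx0]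
      exact Real.rpow_le_rpow (hG0 s) (hGle s hs) hp0.le
    have hx2 : x ≤ 2 * Real.sqrt n := by
      have habs : |s - a| ≤ 2 := by
        rw [abs_le]; constructor <;> [linarith [hs.1]; linarith [hs.2]]
      calc x = Real.sqrt n * |s - a| := rfl
        _ ≤ Real.sqrt n * 2 := by apply mul_le_mul_of_nonneg_left habs hsn.le
        _ = 2 * Real.sqrt n := by ring
    set m : ℕ := ⌊x⌋₊ with hmdef
    have hmN : m < N := by
      have : m ≤ ⌊2 * Real.sqrt n⌋₊ := Nat.floor_le_floor hx2
      omega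
    have hxm : x ≤ (m:ℝ) + 1 := (Nat.lt_floor_add_one x).le
    have hxp : x^p ≤ f m := Real.rpow_le_rpow hx0 hxm hp0.le
    have htele : f m = 1 + ∑ j ∈ Finset.range m, c j := by
      have := Finset.sum_range_sub f m
      have hf0 : f 0 = 1 := by simp [hfdef, Real.one_rpow]
      simp only [hcdef]
      rw [this, hf0]; ring
    have hind : ∑ j ∈ Finset.range m, c j
        ≤ ∑ j ∈ Finset.range N, (A j).indicator (fun _ => c j) s := by
      have hsub : Finset.range m ⊆ Finset.range N := Finset.range_subset_range.2 hmN.le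
      have heq : ∀ j ∈ Finset.range m, c j = (A j).indicator (fun _ => c j) s := by
        intro j hj
        rw [Finset.mem_range] at hj
        have hjx : ((j:ℝ)+1) ≤ x := by
          have : ((j:ℝ)+1) ≤ (m:ℝ) := by exact_mod_cast (by omega : j + 1 ≤ m)
          exact this.trans (Nat.floor_le hx0)
        have hmem : s ∈ A j := by
          simp only [hAdef, Set.mem_setOf_eq]
          rw [div_le_iff₀ hsn]
          calc ((j:ℝ)+1) ≤ x := hjx
            _ = |s - a| * Real.sqrt n := by rw [hxdef]; ring
        rw [Set.indicator_of_mem hmem]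
      rw [Finset.sum_congr rfl heq]
      apply Finset.sum_le_sum_of_subset_of_nonneg hsub
      intro j _ _
      exact Set.indicator_nonneg (fun _ _ => hc0 j) s
    calc G s ^ p ≤ K^p * x^p := hGp
      _ ≤ K^p * (1 + ∑ j ∈ Finset.range m, c j) := by
          apply mul_le_mul_of_nonneg_left _ (Real.rpow_nonneg hK0 p)
          rw [← htele]; exact hxp
      _ ≤ bound s := by
          apply mul_le_mul_of_nonneg_left _ (Real.rpow_nonneg hK0 p)
          linarith [hind]
  -- integrability of bound
  have hint : Integrable bound μ := by
    apply Integrable.const_mul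
    apply Integrable.add (integrable_const 1)
    apply integrable_finset_sum
    intro j _
    exact (integrable_const (c j)).indicator (hmeas j)
  -- integral of bound
  have hIb : ∫ s, bound s ∂μ
      = K^p * (1 + ∑ j ∈ Finset.range N, c j * (μ (A j)).toReal) := by
    rw [integral_const_mul]
    congr 1
    rw [integral_add (integrable_const 1)
      (integrable_finset_sum _ (fun j _ => (integrable_const (c j)).indicator (hmeas j)))]
    rw [integral_const, integral_finset_sum _ (fun j _ => (integrable_const (c j)).indicator (hmeas j))]
    simp only [probReal_univ, smul_eq_mul, one_mul]
    congr 1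
    apply Finset.sum_congr rfl
    intro j _
    rw [integral_indicator_const (c j) (hmeas j), smul_eq_mul, mul_comm, Measure.real]
  -- bound on the sum
  set s₀ : ℝ := γ * Real.sqrt n / 2 with hs₀def
  have hs₀ : 0 < s₀ := by positivity
  have hsum2 : ∑ j ∈ Finset.range N, c j * (μ (A j)).toReal
      ≤ 2 * ((max 1 (4/γ)) * Real.sqrt p) ^ p := by
    have hterm : ∀ j ∈ Finset.range N, c j * (μ (A j)).toReal
        ≤ 2 * 2^p * (p/s₀)^p * Real.exp (-(s₀ * ((j:ℝ)+1))) := by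
      intro j _
      have ht1 : (μ (A j)).toReal ≤ 2 * Real.exp (-(γ * Real.sqrt n * ((j:ℝ)+1))) := by
        apply ENNReal.toReal_le_of_le_ofReal (by positivity) (htail j)
      have hcj : c j ≤ ((j:ℝ)+2)^p := by
        have : (0:ℝ) ≤ f j := Real.rpow_nonneg (by positivity) p
        have he : f (j+1) = ((j:ℝ)+2)^p := by
          simp only [hfdef]; push_cast; ring_nf
        simp only [hcdef]; rw [he] at *; linarith
      have hcj2 : ((j:ℝ)+2)^p ≤ 2^p * ((j:ℝ)+1)^p := by
        rw [← Real.mul_rpow (by norm_num) (by positivity)]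
        exact Real.rpow_le_rpow (by positivity) (by linarith) hp0.le
      have hkey : ((j:ℝ)+1)^p * Real.exp (-(γ * Real.sqrt n * ((j:ℝ)+1)))
          ≤ (p/s₀)^p * Real.exp (-(s₀ * ((j:ℝ)+1))) := by
        have hexp : Real.exp (-(γ * Real.sqrt n * ((j:ℝ)+1)))
            = Real.exp (-(s₀ * ((j:ℝ)+1))) * Real.exp (-(s₀ * ((j:ℝ)+1))) := by
          rw [← Real.exp_add]; congr 1; rw [hs₀def]; ring
        rw [hexp, ← mul_assoc]
        apply mul_le_mul_of_nonneg_right _ (Real.exp_pos _).le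
        exact aux_rpow_exp_le (by positivity) hs₀ hp0
      calc c j * (μ (A j)).toReal ≤ ((j:ℝ)+2)^p * (2 * Real.exp (-(γ * Real.sqrt n * ((j:ℝ)+1)))) := by
            apply mul_le_mul hcj ht1 ENNReal.toReal_nonneg (Real.rpow_nonneg (by positivity) p)
        _ = 2 * (((j:ℝ)+2)^p * Real.exp (-(γ * Real.sqrt n * ((j:ℝ)+1)))) := by ring
        _ ≤ 2 * ((2^p * ((j:ℝ)+1)^p) * Real.exp (-(γ * Real.sqrt n * ((j:ℝ)+1)))) := by
            apply mul_le_mul_of_nonneg_left _ (by norm_num)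
            apply mul_le_mul_of_nonneg_right hcj2 (Real.exp_pos _).le
        _ = 2 * 2^p * (((j:ℝ)+1)^p * Real.exp (-(γ * Real.sqrt n * ((j:ℝ)+1)))) := by ring
        _ ≤ 2 * 2^p * ((p/s₀)^p * Real.exp (-(s₀ * ((j:ℝ)+1)))) := by
            apply mul_le_mul_of_nonneg_left hkey (by positivity)
        _ = 2 * 2^p * (p/s₀)^p * Real.exp (-(s₀ * ((j:ℝ)+1))) := by ring
    have hsum3 : ∑ j ∈ Finset.range N, Real.exp (-(s₀ * ((j:ℝ)+1))) ≤ 1 := by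
      have hterm2 : ∀ j ∈ Finset.range N, Real.exp (-(s₀ * ((j:ℝ)+1))) ≤ Real.exp (-s₀) := by
        intro j _
        apply Real.exp_le_exp.2
        have : s₀ * 1 ≤ s₀ * ((j:ℝ)+1) := by
          apply mul_le_mul_of_nonneg_left (by linarith [Nat.cast_nonneg (α := ℝ) j] : (1:ℝ) ≤ (j:ℝ)+1) hs₀.le
        linarith
      calc ∑ j ∈ Finset.range N, Real.exp (-(s₀ * ((j:ℝ)+1)))
          ≤ ∑ _j ∈ Finset.range N, Real.exp (-s₀) := Finset.sum_le_sum hterm2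
        _ = (N:ℝ) * Real.exp (-s₀) := by rw [Finset.sum_const, Finset.card_range, nsmul_eq_mul]
        _ ≤ 1 := by
            have : Real.exp (-s₀) = Real.exp (-(γ * Real.sqrt n / 2)) := by rw [hs₀def]
            rw [this]; exact_mod_cast hNsum
    have hconst : (0:ℝ) ≤ 2 * 2^p * (p/s₀)^p := by positivity
    calc ∑ j ∈ Finset.range N, c j * (μ (A j)).toReal
        ≤ ∑ j ∈ Finset.range N, 2 * 2^p * (p/s₀)^p * Real.exp (-(s₀ * ((j:ℝ)+1))) :=
          Finset.sum_le_sum hterm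
      _ = 2 * 2^p * (p/s₀)^p * ∑ j ∈ Finset.range N, Real.exp (-(s₀ * ((j:ℝ)+1))) := by
          rw [Finset.mul_sum]
      _ ≤ 2 * 2^p * (p/s₀)^p * 1 := by
          apply mul_le_mul_of_nonneg_left hsum3 hconst
      _ = 2 * (2^p * (p/s₀)^p) := by ring
      _ = 2 * (2 * (p/s₀))^p := by rw [Real.mul_rpow (by norm_num) (by positivity)]
      _ ≤ 2 * ((max 1 (4/γ)) * Real.sqrt p) ^ p := by
          apply mul_le_mul_of_nonneg_left _ (by norm_num)
          apply Real.rpow_le_rpow (by positivity) _ hp0.le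
          have h1 : 2 * (p/s₀) = (4/γ) * (p / Real.sqrt n) := by
            rw [hs₀def]; field_simp; ring
          have h2 : p / Real.sqrt n ≤ Real.sqrt p := by
            rw [div_le_iff₀ hsn]
            calc p = Real.sqrt p * Real.sqrt p := (Real.mul_self_sqrt hp0.le).symm
              _ ≤ Real.sqrt p * Real.sqrt n := by
                  apply mul_le_mul_of_nonneg_left (Real.sqrt_le_sqrt hpn) (Real.sqrt_nonneg _)
          rw [h1]
          calc (4/γ) * (p / Real.sqrt n) ≤ (4/γ) * Real.sqrt p := by
                apply mul_le_mul_of_nonneg_left h2 (by positivity)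
            _ ≤ (max 1 (4/γ)) * Real.sqrt p := by
                apply mul_le_mul_of_nonneg_right (le_max_right _ _) (Real.sqrt_nonneg _)
  -- put together
  have hle1 : (∫ s, G s ^ p ∂μ) ≤ ∫ s, bound s ∂μ := by
    apply integral_mono_of_nonneg
    · filter_upwards with s
      exact Real.rpow_nonneg (hG0 s) p
    · exact hint
    · filter_upwards [hae] with s hs
      exact hptwise s hs
  have hCp1 : (1:ℝ) ≤ ((max 1 (4/γ)) * Real.sqrt p) ^ p := by
    apply Real.one_le_rpow _ hp0.le
    have h1 : (1:ℝ) ≤ max 1 (4/γ) := le_max_left _ _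
    have h2 : (1:ℝ) ≤ Real.sqrt p := by
      rw [show (1:ℝ) = Real.sqrt 1 by simp]
      exact Real.sqrt_le_sqrt hp
    nlinarith
  calc (∫ s, G s ^ p ∂μ) ≤ ∫ s, bound s ∂μ := hle1
    _ = K^p * (1 + ∑ j ∈ Finset.range N, c j * (μ (A j)).toReal) := hIb
    _ ≤ K^p * (1 + 2 * ((max 1 (4/γ)) * Real.sqrt p) ^ p) := by
        apply mul_le_mul_of_nonneg_left _ (Real.rpow_nonneg hK0 p)
        linarith [hsum2]
    _ ≤ K^p * (3 * ((max 1 (4/γ)) * Real.sqrt p) ^ p) := by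
        apply mul_le_mul_of_nonneg_left _ (Real.rpow_nonneg hK0 p)
        linarith [hCp1]
    _ = 3 * K ^ p * ((max 1 (4/γ)) * Real.sqrt p) ^ p := by ring

lemma aux_delta_le {a b s : ℝ} (hb0 : 0 < b) (ha2 : a^2 = 1 - b^2)
    (hs1 : -1 ≤ s) (hs2 : s ≤ 1) :
    Real.sqrt ((s - a)^2 + (Real.sqrt (1 - s^2) - b)^2)
      ≤ Real.sqrt (1 + 4/b^2) * |s - a| := by
  set y : ℝ := Real.sqrt (1 - s^2) with hydef
  have h1s : 0 ≤ 1 - s^2 := by nlinarith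
  have hy0 : 0 ≤ y := Real.sqrt_nonneg _
  have hy2 : y^2 = 1 - s^2 := Real.sq_sqrt h1s
  have h1 : (y - b)^2 * (y + b)^2 = (s-a)^2 * (s+a)^2 := by
    have e1 : (y - b)^2 * (y + b)^2 = (y^2 - b^2)^2 := by ring
    have e2 : (s-a)^2 * (s+a)^2 = (s^2 - a^2)^2 := by ring
    rw [e1, e2, hy2]
    have h2 : s^2 - a^2 = -(1 - s^2 - b^2) := by linarith
    rw [h2]; ring
  have h3 : b^2 ≤ (y + b)^2 := by nlinarith [hy0, hb0.le, sq_nonneg y]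
  have h4 : (s+a)^2 ≤ 4 := by
    have hbb : b^2 ≤ 1 := by nlinarith [sq_nonneg a]
    have haa : a^2 ≤ 1 := by nlinarith [sq_nonneg b]
    have ha1' : -1 ≤ a ∧ a ≤ 1 := abs_le.1 (abs_le_one_iff_mul_self_le_one.2 (by nlinarith))
    nlinarith [ha1'.1, ha1'.2]
  have h5 : (y-b)^2 * b^2 ≤ 4 * (s-a)^2 := by
    calc (y-b)^2 * b^2 ≤ (y-b)^2 * (y+b)^2 := by
          apply mul_le_mul_of_nonneg_left h3 (sq_nonneg _)
      _ = (s-a)^2 * (s+a)^2 := h1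
      _ ≤ 4 * (s-a)^2 := by nlinarith [sq_nonneg (s-a), h4]
  have h6 : (y-b)^2 ≤ 4/b^2 * (s-a)^2 := by
    rw [div_mul_eq_mul_div, le_div_iff₀ (by positivity : (0:ℝ) < b^2)]
    linarith
  have h7 : (s - a)^2 + (y - b)^2 ≤ (1 + 4/b^2) * (s-a)^2 := by
    have : (1 + 4/b^2) * (s-a)^2 = (s-a)^2 + 4/b^2 * (s-a)^2 := by ring
    linarith
  calc Real.sqrt ((s - a)^2 + (y - b)^2) ≤ Real.sqrt ((1 + 4/b^2) * (s-a)^2) :=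
        Real.sqrt_le_sqrt h7
    _ = Real.sqrt (1 + 4/b^2) * |s - a| := by
        rw [Real.sqrt_mul (by positivity), Real.sqrt_sq_eq_abs]

lemma aux_delta_two {a b s : ℝ} (ha0 : 0 ≤ a) (ha1 : a ≤ 1) (hb0 : 0 ≤ b)
    (ha2 : a^2 = 1 - b^2) (hs1 : -1 ≤ s) (hs2 : s ≤ 1) :
    Real.sqrt ((s - a)^2 + (Real.sqrt (1 - s^2) - b)^2) ≤ 2 := by
  set y : ℝ := Real.sqrt (1 - s^2) with hydef
  have h1s : 0 ≤ 1 - s^2 := by nlinarith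
  have hy0 : 0 ≤ y := Real.sqrt_nonneg _
  have hy2 : y^2 = 1 - s^2 := Real.sq_sqrt h1s
  have has : -1 ≤ a*s := by nlinarith
  have hby : 0 ≤ b*y := mul_nonneg hb0 hy0
  have hsum : (s-a)^2 + (y - b)^2 ≤ 4 := by
    have he : (s-a)^2 + (y-b)^2 = s^2 + y^2 + (a^2 + b^2) - 2*(a*s) - 2*(b*y) := by ring
    rw [he, hy2]
    have : a^2 + b^2 = 1 := by linarith
    rw [this]; linarith
  calc Real.sqrt ((s - a)^2 + (y - b)^2) ≤ Real.sqrt 4 := Real.sqrt_le_sqrt hsum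
    _ = 2 := by
        rw [show (4:ℝ) = 2^2 by norm_num, Real.sqrt_sq (by norm_num)]

/-- Let `S` have CDF `(1 - Q_n(s))^M` on `[-1,1]` with
`M = ⌊2^{nR}⌋`, and let
`Δ₁ = √((S - √(1-2^{-2R}))² + (√(1-S²) - 2^{-R})²)`. Then for all `p ≥ 1`,
`(E[(√n·Δ₁)^p])^{1/p} ≤ C√p` with `C` depending only on `R`. -/
theorem stmt13 (R : ℝ) (hR : 0 < R) :
    ∃ C : ℝ, 0 < C ∧
      ∀ (n : ℕ), 2 ≤ n →
      ∀ μ : Measure ℝ, IsProbabilityMeasure μ →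
        μ (Set.Icc (-1 : ℝ) 1)ᶜ = 0 →
        (∀ s ∈ Set.Icc (-1 : ℝ) 1,
          μ (Set.Iic s) = ENNReal.ofReal ((1 - Qfun n s) ^ numCodewords n R)) →
        ∀ p : ℝ, 1 ≤ p →
          (∫ s, (Real.sqrt n *
              Real.sqrt ((s - Real.sqrt (1 - 2 ^ (-(2 * R)))) ^ 2 +
                (Real.sqrt (1 - s ^ 2) - 2 ^ (-R)) ^ 2)) ^ p ∂μ) ^ (1 / p) ≤
            C * Real.sqrt p := by
  classical
  set b : ℝ := (2:ℝ) ^ (-R) with hbdef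
  set a : ℝ := Real.sqrt (1 - (2:ℝ) ^ (-(2 * R))) with hadef
  have h2R0 : (0:ℝ) < (2:ℝ) ^ (-(2 * R)) := Real.rpow_pos_of_pos (by norm_num) _
  have h2R1 : (2:ℝ) ^ (-(2 * R)) < 1 :=
    Real.rpow_lt_one_of_one_lt_of_neg one_lt_two (by linarith)
  have hb0 : 0 < b := Real.rpow_pos_of_pos (by norm_num) _
  have hb1 : b < 1 := Real.rpow_lt_one_of_one_lt_of_neg one_lt_two (by linarith)
  have hb2 : b^2 = (2:ℝ)^(-(2*R)) := by
    rw [hbdef, ← Real.rpow_natCast ((2:ℝ)^(-R)) 2, ← Real.rpow_mul (by norm_num : (0:ℝ) ≤ 2)]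
    congr 1; push_cast; ring
  have ha2 : a^2 = 1 - b^2 := by
    rw [hadef, Real.sq_sqrt (by linarith), hb2]
  have ha0 : 0 < a := by
    rw [hadef]; apply Real.sqrt_pos.2; rw [← hb2]; nlinarith [hb1, hb0]
  have ha1 : a ≤ 1 := by
    rw [hadef]; exact Real.sqrt_le_one.2 (by linarith)
  set γ : ℝ := a / (16 * b^2) with hγdef
  have hγ0 : 0 < γ := by rw [hγdef]; positivity
  set u₀ : ℝ := min a (b^2 / a) with hu₀def
  have hu₀0 : 0 < u₀ := lt_min ha0 (by positivity)
  set K : ℝ := Real.sqrt (1 + 4 / b^2) with hKdef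
  have hK1 : 1 ≤ K := by
    rw [hKdef, show (1:ℝ) = Real.sqrt 1 by simp]
    apply Real.sqrt_le_sqrt
    have : 0 < 4 / b^2 := by positivity
    simp only [Real.sqrt_one]
    linarith
  have hK0 : (0:ℝ) < K := lt_of_lt_of_le one_pos hK1
  obtain ⟨N1, hN1⟩ := aux_master hγ0 (24*γ)
  obtain ⟨N2, hN2⟩ := aux_master (show 0 < γ * u₀ by positivity) (48*γ/u₀)
  obtain ⟨N3, hN3⟩ := aux_master (show 0 < R * Real.log 2 by
    exact mul_pos hR (Real.log_pos one_lt_two)) (40*γ)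
  obtain ⟨N4, hN4⟩ := aux_master (show 0 < 3*γ by positivity) ((2:ℝ)^(3*R))
  obtain ⟨N5, hN5⟩ := aux_master (show 0 < γ/2 by positivity) 3
  set n₀ : ℕ := max (max (max N1 N2) (max N3 N4)) (max N5 (max 6 (⌈1/R⌉₊ + 1))) with hn₀def
  set C : ℝ := 3*K*(max 1 (4/γ)) + 2*Real.sqrt n₀ + 2 with hCdef
  have hC0 : 0 < C := by
    rw [hCdef]
    have h1 : (0:ℝ) ≤ 3*K*(max 1 (4/γ)) := by positivity
    have h2 : (0:ℝ) ≤ 2*Real.sqrt n₀ := by positivity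
    linarith
  have hC2 : 2 ≤ C := by
    rw [hCdef]
    have h1 : (0:ℝ) ≤ 3*K*(max 1 (4/γ)) := by positivity
    have h2 : (0:ℝ) ≤ 2*Real.sqrt n₀ := by positivity
    linarith
  refine ⟨C, hC0, ?_⟩
  intro n hn2 μ hμprob hμc hcdf p hp
  haveI := hμprob
  have hp0 : 0 < p := lt_of_lt_of_le one_pos hp
  have hsp1 : 1 ≤ Real.sqrt p := by
    rw [show (1:ℝ) = Real.sqrt 1 by simp]
    exact Real.sqrt_le_sqrt hp
  have hn0 : (0:ℝ) < n := by
    have : (2:ℝ) ≤ n := by exact_mod_cast hn2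
    linarith
  have hsn : 0 < Real.sqrt n := Real.sqrt_pos.2 hn0
  have hae : ∀ᵐ s ∂μ, s ∈ Set.Icc (-1:ℝ) 1 := by
    rw [MeasureTheory.ae_iff]
    have : {s : ℝ | ¬ s ∈ Set.Icc (-1:ℝ) 1} = (Set.Icc (-1:ℝ) 1)ᶜ := rfl
    rw [this]; exact hμc
  set G : ℝ → ℝ := fun s => Real.sqrt n *
      Real.sqrt ((s - a) ^ 2 + (Real.sqrt (1 - s ^ 2) - b) ^ 2) with hGdef
  have hG0 : ∀ s, 0 ≤ G s := fun s => by
    rw [hGdef]; positivity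
  have hint0 : 0 ≤ ∫ s, G s ^ p ∂μ :=
    integral_nonneg fun s => Real.rpow_nonneg (hG0 s) p
  -- the trivial bound
  have htriv : (∫ s, G s ^ p ∂μ) ≤ (2 * Real.sqrt n) ^ p := by
    have hb1 : (∫ s, G s ^ p ∂μ) ≤ ∫ _s, (2 * Real.sqrt n) ^ p ∂μ := by
      apply integral_mono_of_nonneg
      · filter_upwards with s; exact Real.rpow_nonneg (hG0 s) p
      · exact integrable_const _
      · filter_upwards [hae] with s hs
        apply Real.rpow_le_rpow (hG0 s) _ hp0.le
        rw [hGdef]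
        calc Real.sqrt n * Real.sqrt ((s - a) ^ 2 + (Real.sqrt (1 - s ^ 2) - b) ^ 2)
            ≤ Real.sqrt n * 2 := by
              apply mul_le_mul_of_nonneg_left
                (aux_delta_two ha0.le ha1 hb0.le ha2 hs.1 hs.2) hsn.le
          _ = 2 * Real.sqrt n := by ring
    rw [integral_const, probReal_univ, one_smul] at hb1
    exact hb1
  have htriv2 : (∫ s, G s ^ p ∂μ) ^ (1/p) ≤ 2 * Real.sqrt n := by
    calc (∫ s, G s ^ p ∂μ) ^ (1/p) ≤ ((2 * Real.sqrt n) ^ p) ^ (1/p) :=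
          Real.rpow_le_rpow hint0 htriv (by positivity)
      _ = 2 * Real.sqrt n := by
          rw [← Real.rpow_mul (by positivity), mul_one_div_cancel hp0.ne', Real.rpow_one]
  by_cases hcase : (n:ℝ) ≤ p ∨ n < n₀
  · -- trivial cases
    rcases hcase with hnp | hnn₀
    · calc (∫ s, G s ^ p ∂μ) ^ (1/p) ≤ 2 * Real.sqrt n := htriv2
        _ ≤ 2 * Real.sqrt p := by
            apply mul_le_mul_of_nonneg_left (Real.sqrt_le_sqrt hnp) (by norm_num)
        _ ≤ C * Real.sqrt p := by
            apply mul_le_mul_of_nonneg_right hC2 (Real.sqrt_nonneg _)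
    · calc (∫ s, G s ^ p ∂μ) ^ (1/p) ≤ 2 * Real.sqrt n := htriv2
        _ ≤ 2 * Real.sqrt n₀ := by
            apply mul_le_mul_of_nonneg_left _ (by norm_num)
            exact Real.sqrt_le_sqrt (by exact_mod_cast hnn₀.le)
        _ ≤ C := by
            rw [hCdef]
            have h1 : (0:ℝ) ≤ 3*K*(max 1 (4/γ)) := by positivity
            linarith
        _ = C * 1 := by ring
        _ ≤ C * Real.sqrt p := by
            apply mul_le_mul_of_nonneg_left hsp1 hC0.le
  · -- main case
    push_neg at hcase
    obtain ⟨hpn', hnn₀⟩ := hcase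
    have hpn : p ≤ n := hpn'.le
    have hn6 : 6 ≤ n := le_trans (le_max_of_le_right (le_max_of_le_right (le_max_left _ _))) hnn₀
    have hn6' : (6:ℝ) ≤ n := by exact_mod_cast hn6
    have hsn1 : 1 ≤ Real.sqrt n := by
      rw [show (1:ℝ) = Real.sqrt 1 by simp]
      exact Real.sqrt_le_sqrt (by linarith)
    have hnR : 1 ≤ (n:ℝ) * R := by
      have h1 : (⌈1/R⌉₊ + 1 : ℕ) ≤ n :=
        le_trans (le_max_of_le_right (le_max_of_le_right (le_max_right _ _))) hnn₀
      have h2 : (1/R : ℝ) ≤ ⌈1/R⌉₊ := Nat.le_ceil _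
      have h3 : ((⌈1/R⌉₊ + 1 : ℕ) : ℝ) ≤ n := by exact_mod_cast h1
      have h4 : (1/R : ℝ) ≤ n := by push_cast at h3; linarith
      rw [div_le_iff₀ hR] at h4
      linarith [mul_comm (n:ℝ) R]
    have hN1n : N1 ≤ n := le_trans (le_max_of_le_left (le_max_of_le_left (le_max_left _ _))) hnn₀
    have hN2n : N2 ≤ n := le_trans (le_max_of_le_left (le_max_of_le_left (le_max_right _ _))) hnn₀
    have hN3n : N3 ≤ n := le_trans (le_max_of_le_left (le_max_of_le_right (le_max_left _ _))) hnn₀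
    have hN4n : N4 ≤ n := le_trans (le_max_of_le_left (le_max_of_le_right (le_max_right _ _))) hnn₀
    have hN5n : N5 ≤ n := le_trans (le_max_of_le_right (le_max_left _ _)) hnn₀
    -- tail bound in the form needed
    have htail : ∀ j : ℕ, μ {s : ℝ | ((j:ℝ)+1) / Real.sqrt n ≤ |s - a|}
        ≤ ENNReal.ofReal (2 * Real.exp (-(γ * Real.sqrt n * ((j:ℝ)+1)))) := by
      intro j
      have hj1 : (0:ℝ) < (j:ℝ) + 1 := by positivity
      have hu : 1 ≤ (((j:ℝ)+1) / Real.sqrt n) * Real.sqrt n := by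
        rw [div_mul_cancel₀ _ hsn.ne']
        linarith [Nat.cast_nonneg (α := ℝ) j]
      have h := aux_tail μ n R a b γ u₀ hR hbdef ha2 ha0 ha1 hγdef hu₀def hn6 hnR hμc hcdf
        (hN1 n hN1n) (hN2 n hN2n) (hN3 n hN3n) (hN4 n hN4n)
        (((j:ℝ)+1) / Real.sqrt n) hu
      have heq : γ * (n:ℝ) * (((j:ℝ)+1) / Real.sqrt n) = γ * Real.sqrt n * ((j:ℝ)+1) := by
        have hss : Real.sqrt n * Real.sqrt n = (n:ℝ) := Real.mul_self_sqrt hn0.le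
        have h2 : (γ * Real.sqrt n * ((j:ℝ)+1)) * Real.sqrt n = γ * (n:ℝ) * ((j:ℝ)+1) := by
          have he : γ * Real.sqrt n * ((j:ℝ)+1) * Real.sqrt n
              = γ * (Real.sqrt n * Real.sqrt n) * ((j:ℝ)+1) := by ring
          rw [he, hss]
        calc γ * (n:ℝ) * (((j:ℝ)+1) / Real.sqrt n)
            = (γ * (n:ℝ) * ((j:ℝ)+1)) / Real.sqrt n := by ring
          _ = ((γ * Real.sqrt n * ((j:ℝ)+1)) * Real.sqrt n) / Real.sqrt n := by rw [h2]
          _ = γ * Real.sqrt n * ((j:ℝ)+1) := mul_div_cancel_right₀ _ hsn.ne'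
      rw [heq] at h
      exact h
    -- sum condition
    have hNsum : ((⌊2 * Real.sqrt n⌋₊ + 1 : ℕ) : ℝ) * Real.exp (-(γ * Real.sqrt n / 2)) ≤ 1 := by
      have hNle : ((⌊2 * Real.sqrt n⌋₊ + 1 : ℕ) : ℝ) ≤ 3 * n := by
        push_cast
        have h1 : (⌊2 * Real.sqrt n⌋₊ : ℝ) ≤ 2 * Real.sqrt n := Nat.floor_le (by positivity)
        have h2 : Real.sqrt n ≤ (n:ℝ) := by
          nlinarith [Real.mul_self_sqrt hn0.le, hsn1]
        linarith
      have hm5 := hN5 n hN5n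
      have h3 : (3:ℝ) * n * Real.exp (-(γ * Real.sqrt n / 2)) ≤ 1 := by
        have he : Real.exp (γ/2 * Real.sqrt n) * Real.exp (-(γ * Real.sqrt n / 2)) = 1 := by
          rw [← Real.exp_add, show γ/2 * Real.sqrt n + -(γ * Real.sqrt n / 2) = 0 by ring,
            Real.exp_zero]
        calc (3:ℝ) * n * Real.exp (-(γ * Real.sqrt n / 2))
            ≤ Real.exp (γ/2 * Real.sqrt n) * Real.exp (-(γ * Real.sqrt n / 2)) := by
              apply mul_le_mul_of_nonneg_right hm5 (Real.exp_pos _).le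
          _ = 1 := he
      calc ((⌊2 * Real.sqrt n⌋₊ + 1 : ℕ) : ℝ) * Real.exp (-(γ * Real.sqrt n / 2))
          ≤ 3 * n * Real.exp (-(γ * Real.sqrt n / 2)) := by
            apply mul_le_mul_of_nonneg_right hNle (Real.exp_pos _).le
        _ ≤ 1 := h3
    -- pointwise bound
    have hGle : ∀ s ∈ Set.Icc (-1:ℝ) 1, G s ≤ K * (Real.sqrt n * |s - a|) := by
      intro s hs
      rw [hGdef]
      calc Real.sqrt n * Real.sqrt ((s - a) ^ 2 + (Real.sqrt (1 - s ^ 2) - b) ^ 2)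
          ≤ Real.sqrt n * (K * |s - a|) := by
            apply mul_le_mul_of_nonneg_left (aux_delta_le hb0 ha2 hs.1 hs.2) hsn.le
        _ = K * (Real.sqrt n * |s - a|) := by ring
    have hmain := aux_moment_bound μ G a γ K n p hγ0 hK1 hp hpn (by omega) ha0.le ha1
      hG0 hae hGle htail hNsum
    -- conclude
    have hfin : ((3:ℝ) * K ^ p * ((max 1 (4/γ)) * Real.sqrt p) ^ p) ^ (1/p)
        ≤ 3 * K * (max 1 (4/γ)) * Real.sqrt p := by
      have hKp0 : (0:ℝ) ≤ K ^ p := Real.rpow_nonneg hK0.le p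
      have hMp0 : (0:ℝ) ≤ ((max 1 (4/γ)) * Real.sqrt p) := by positivity
      rw [Real.mul_rpow (by positivity) (Real.rpow_nonneg hMp0 p),
        Real.mul_rpow (by norm_num) hKp0,
        ← Real.rpow_mul hK0.le, mul_one_div_cancel hp0.ne', Real.rpow_one,
        ← Real.rpow_mul hMp0, mul_one_div_cancel hp0.ne', Real.rpow_one]
      have h3p : (3:ℝ) ^ (1/p) ≤ 3 := by
        calc (3:ℝ) ^ (1/p) ≤ (3:ℝ) ^ (1:ℝ) :=
              Real.rpow_le_rpow_of_exponent_le (by norm_num) (by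
                rw [div_le_one hp0]; exact hp)
          _ = 3 := Real.rpow_one 3
      calc (3:ℝ) ^ (1/p) * K * ((max 1 (4/γ)) * Real.sqrt p)
          ≤ 3 * K * ((max 1 (4/γ)) * Real.sqrt p) := by
            apply mul_le_mul_of_nonneg_right _ hMp0
            apply mul_le_mul_of_nonneg_right h3p hK0.le
        _ = 3 * K * (max 1 (4/γ)) * Real.sqrt p := by ring
    calc (∫ s, G s ^ p ∂μ) ^ (1/p)
        ≤ ((3:ℝ) * K ^ p * ((max 1 (4/γ)) * Real.sqrt p) ^ p) ^ (1/p) :=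
          Real.rpow_le_rpow hint0 hmain (by positivity)
      _ ≤ 3 * K * (max 1 (4/γ)) * Real.sqrt p := hfin
      _ ≤ C * Real.sqrt p := by
          apply mul_le_mul_of_nonneg_right _ (Real.sqrt_nonneg _)
          rw [hCdef]
          have h2 : (0:ℝ) ≤ 2*Real.sqrt n₀ := by positivity
          linarith
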